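/- Let G be a finite connected multigraph with non-trivial vertex partition Π, T_τ a trans-block ordered spanning tree of G with associated sequence of partitions Π_0, ..., Π_{|V|−2}, and let k_p be the number of trans-block edges of G_p for Π_p. Then the weight w^Π(G, T_τ) defined by the integral ∫_{[0,1]^{|V|−1}} (∏_{ℓ∈T} Y_ℓ(u)) (∏_{ℓ∉T} X_{v(ℓ)v'(ℓ)}(u)) du equals ∏_{p=0}^{|V|−2} 1/k_p. -/

import Mathlib

open scoped Classical
open MeasureTheory

/-- A multigraph on vertex type `V` with edge type `E`: each edge has an
unordered pair of endpoints (self-loops and multiple edges allowed). -/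
structure Multigraph (V E : Type) where
  ends : E → Sym2 V

namespace Multigraph

variable {V E : Type}

/-- Two vertices are connected using only edges in the subset `S`. -/
def Connects (G : Multigraph V E) (S : Finset E) (v w : V) : Prop :=
  Relation.ReflTransGen (fun a b => ∃ e ∈ S, G.ends e = s(a, b)) v w

/-- The multigraph is connected. -/
def IsConnected (G : Multigraph V E) [Fintype E] : Prop :=
  ∀ v w : V, G.Connects Finset.univ v w

/-- A spanning tree: a spanning connected edge subset with `|V| - 1` edges. -/
def IsSpanningTree (G : Multigraph V E) [Fintype V] [Fintype E] (T : Finset E) : Prop :=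
  (∀ v w : V, G.Connects T v w) ∧ T.card = Fintype.card V - 1

/-- Kruskal's greedy algorithm: process the edges in increasing order of the
Hepp sector `σ`, inserting an edge iff it does not create a cycle (i.e. iff
its endpoints are not yet connected by the edges selected so far). -/
noncomputable def kruskal (G : Multigraph V E) [Fintype E]
    (σ : E ≃ Fin (Fintype.card E)) : Finset E :=
  ((List.finRange (Fintype.card E)).map σ.symm).foldl
    (fun S e => if ∀ a b, G.ends e = s(a, b) → ¬ G.Connects S a b then insert e S else S) ∅

/-- The symmetric weight `w_s(G,T)`: the fraction of Hepp sectors for which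
`T` is the Kruskal leading tree. -/
noncomputable def ws (G : Multigraph V E) [Fintype V] [Fintype E] (T : Finset E) : ℚ :=
  (Fintype.card {σ : E ≃ Fin (Fintype.card E) // G.kruskal σ = T} : ℚ) /
    (Nat.factorial (Fintype.card E) : ℚ)

/-- Updating the merge relation (which vertices have been identified) after
contracting the edge `e`: the equivalence closure of `M` together with the
pair of endpoints of `e`. -/
def mergeStep (G : Multigraph V E) (M : V → V → Prop) (e : E) : V → V → Prop :=
  Relation.EqvGen (fun a b => M a b ∨ G.ends e = s(a, b))

/-- Updating the block (partition) relation after contracting the trans-block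
edge `e`: the new merged vertex forms a singleton block, the endpoints of `e`
are removed from their old blocks, and all other blocks are unchanged. -/
def blockStep (G : Multigraph V E) (M B : V → V → Prop) (e : E) : V → V → Prop :=
  fun x y => ∀ a b, G.ends e = s(a, b) →
    ((G.mergeStep M e x a ∧ G.mergeStep M e y a) ∨
      (B x y ∧ ¬ G.mergeStep M e x a ∧ ¬ G.mergeStep M e y a))

/-- One contraction step on the pair (merge relation, block relation). -/
def stepPair (G : Multigraph V E) (s : (V → V → Prop) × (V → V → Prop)) (e : E) :
    (V → V → Prop) × (V → V → Prop) :=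
  (G.mergeStep s.1 e, G.blockStep s.1 s.2 e)

/-- The state (merge relation, block relation) after contracting, in order,
the edges of the list `L`, starting from the discrete merge relation `Eq` and
initial block (partition) relation `B0`. -/
def state (G : Multigraph V E) (B0 : V → V → Prop) (L : List E) :
    (V → V → Prop) × (V → V → Prop) :=
  L.foldl G.stepPair (Eq, B0)

/-- An edge is trans-block for the block relation `B` if its endpoints lie in
distinct blocks (in particular it is not a self-loop, even after merging). -/
def TransBlock (G : Multigraph V E) (B : V → V → Prop) (e : E) : Prop :=
  ∀ a b, G.ends e = s(a, b) → ¬ B a b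

/-- The ordered list of edges `L` is a trans-block ordered forest for the
initial partition `B0`: each successive edge is trans-block for the
successively contracted partition. -/
def IsTransBlockSeq (G : Multigraph V E) (B0 : V → V → Prop) (L : List E) : Prop :=
  ∀ p (h : p < L.length), G.TransBlock (G.state B0 (L.take p)).2 (L.get ⟨p, h⟩)

/-- `k_p`: the number of trans-block edges of the `p`-th contracted graph for
the `p`-th contracted partition (already-contracted edges are self-loops of
the contracted graph, hence never trans-block). -/
noncomputable def kcount (G : Multigraph V E) [Fintype E] (B0 : V → V → Prop)
    (L : List E) (p : ℕ) : ℕ :=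
  (Finset.univ.filter fun e => G.TransBlock (G.state B0 (L.take p)).2 e).card

/-- First contact index `i(v,v')`: smallest `p` such that `v, v'` lie in
different blocks of `Π_p` (with the convention `i(v,v) = -1, j(v,v) = 0`,
realized here by taking `i(v,v) = j(v,v) = 0`, which makes the corresponding
products empty, as in the convention `X_{v,v} = 1`). -/
noncomputable def iIdx (G : Multigraph V E) (B0 : V → V → Prop) (L : List E)
    (v v' : V) : ℕ :=
  if v = v' then 0 else sInf {p | ¬ (G.state B0 (L.take p)).2 v v'}

/-- Second contact index `j(v,v')`: smallest `p` such that `v, v'` have been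
merged into a single vertex of `G_p`. -/
noncomputable def jIdx (G : Multigraph V E) (B0 : V → V → Prop) (L : List E)
    (v v' : V) : ℕ :=
  sInf {p | (G.state B0 (L.take p)).1 v v'}

/-- Entry of the contact matrix: `X_{v,v'}(u) = ∏_{i(v,v') < k ≤ j(v,v')} u_k`,
where the variable `u_k` (1 ≤ k ≤ |V|-1) is represented by `w ⟨k-1⟩`. -/
noncomputable def Xent (G : Multigraph V E) (B0 : V → V → Prop) (L : List E)
    (n : ℕ) (w : Fin n → ℝ) (v v' : V) : ℝ :=
  ∏ k : Fin n,
    if G.iIdx B0 L v v' ≤ (k : ℕ) ∧ (k : ℕ) < G.jIdx B0 L v v' then w k else 1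

/-- Contact-matrix factor `X_{v(ℓ),v'(ℓ)}(u)` of a (loop) edge `ℓ`. -/
noncomputable def XentE (G : Multigraph V E) (B0 : V → V → Prop) (L : List E)
    (n : ℕ) (w : Fin n → ℝ) (e : E) : ℝ :=
  ∏ k : Fin n,
    if (∀ a b, G.ends e = s(a, b) →
        (G.iIdx B0 L a b ≤ (k : ℕ) ∧ (k : ℕ) < G.jIdx B0 L a b)) then w k else 1

/-- Tree edge factor `Y_ℓ(u) = ∏_{i(v(ℓ),v'(ℓ)) < k < j(v(ℓ),v'(ℓ))} u_k`. -/
noncomputable def Yent (G : Multigraph V E) (B0 : V → V → Prop) (L : List E)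
    (n : ℕ) (w : Fin n → ℝ) (e : E) : ℝ :=
  ∏ k : Fin n,
    if (∀ a b, G.ends e = s(a, b) →
        (G.iIdx B0 L a b ≤ (k : ℕ) ∧ (k : ℕ) + 1 < G.jIdx B0 L a b)) then w k else 1

/-- The weight `∏_{p=0}^{|V|-2} 1/k_p` of a trans-block ordered tree, and `0`
for a non-admissible ordering. -/
noncomputable def wOrd (G : Multigraph V E) [Fintype V] [Fintype E]
    (B0 : V → V → Prop) (L : List E) : ℚ :=
  if G.IsTransBlockSeq B0 L then
    ∏ p ∈ Finset.range (Fintype.card V - 1), ((G.kcount B0 L p : ℚ))⁻¹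
  else 0

/-- The partition tree weight `w^Π(G,T)`: the sum over all admissible
orderings `τ` of `T` of `∏_{p=0}^{|V|-2} 1/k_p(T_τ)`. -/
noncomputable def wPi (G : Multigraph V E) [Fintype V] [Fintype E]
    (B0 : V → V → Prop) (T : Finset E) : ℚ :=
  ∑ τ : Fin T.card ≃ {e // e ∈ T}, G.wOrd B0 (List.ofFn fun i => ((τ i : E)))

end Multigraph

namespace Multigraph

variable {V E : Type}

section Aux

variable (G : Multigraph V E) (B0 : V → V → Prop) (L : List E)

lemma mergeStep_le (M : V → V → Prop) (e : E) {x y : V} (h : M x y) :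
    G.mergeStep M e x y :=
  Relation.EqvGen.rel _ _ (Or.inl h)

lemma mergeStep_equiv (M : V → V → Prop) (e : E) : Equivalence (G.mergeStep M e) :=
  Relation.EqvGen.is_equivalence _

lemma mergeStep_gen (M : V → V → Prop) {e : E} {a b : V}
    (hab : G.ends e = s(a, b)) : G.mergeStep M e a b :=
  Relation.EqvGen.rel _ _ (Or.inr hab)

lemma ends_exists (e : E) : ∃ a b, G.ends e = s(a, b) :=
  Sym2.ind (f := fun z => ∃ a b, z = s(a, b)) (fun a b => ⟨a, b, rfl⟩) (G.ends e)

lemma mergeStep_char {M : V → V → Prop} (hM : Equivalence M)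
    {e : E} {a b : V} (hab : G.ends e = s(a, b)) {x y : V}
    (h : G.mergeStep M e x y) :
    M x y ∨ ((M x a ∨ M x b) ∧ (M y a ∨ M y b)) := by
  induction h with
  | rel u v huv =>
    rcases huv with h' | h'
    · exact Or.inl h'
    · have : s(a, b) = s(u, v) := hab.symm.trans h'
      rw [Sym2.eq_iff] at this
      rcases this with ⟨rfl, rfl⟩ | ⟨rfl, rfl⟩
      · exact Or.inr ⟨Or.inl (hM.refl _), Or.inr (hM.refl _)⟩
      · exact Or.inr ⟨Or.inr (hM.refl _), Or.inl (hM.refl _)⟩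
  | refl u => exact Or.inl (hM.refl u)
  | symm u v _ ih =>
    rcases ih with h' | ⟨h1, h2⟩
    · exact Or.inl (hM.symm h')
    · exact Or.inr ⟨h2, h1⟩
  | trans u v w _ _ ih1 ih2 =>
    rcases ih1 with h1 | ⟨h1, h2⟩
    · rcases ih2 with h3 | ⟨h3, h4⟩
      · exact Or.inl (hM.trans h1 h3)
      · refine Or.inr ⟨?_, h4⟩
        rcases h3 with h3 | h3
        · exact Or.inl (hM.trans h1 h3)
        · exact Or.inr (hM.trans h1 h3)
    · rcases ih2 with h3 | ⟨h3, h4⟩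
      · refine Or.inr ⟨h1, ?_⟩
        rcases h2 with h2 | h2
        · exact Or.inl (hM.trans (hM.symm h3) h2)
        · exact Or.inr (hM.trans (hM.symm h3) h2)
      · exact Or.inr ⟨h1, h4⟩

lemma good_step {M B : V → V → Prop} (e : E)
    (hM : Equivalence M) (hB : Equivalence B) (hMB : ∀ x y, M x y → B x y) :
    Equivalence (G.mergeStep M e) ∧ Equivalence (G.blockStep M B e) ∧
      (∀ x y, G.mergeStep M e x y → G.blockStep M B e x y) := by
  have hM' := G.mergeStep_equiv M e
  refine ⟨hM', ⟨?_, ?_, ?_⟩, ?_⟩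
  · intro x a b hab
    by_cases h : G.mergeStep M e x a
    · exact Or.inl ⟨h, h⟩
    · exact Or.inr ⟨hB.refl x, h, h⟩
  · intro x y hxy a b hab
    rcases hxy a b hab with ⟨h1, h2⟩ | ⟨h1, h2, h3⟩
    · exact Or.inl ⟨h2, h1⟩
    · exact Or.inr ⟨hB.symm h1, h3, h2⟩
  · intro x y z hxy hyz a b hab
    rcases hxy a b hab with ⟨h1, h2⟩ | ⟨h1, h2, h3⟩ <;>
      rcases hyz a b hab with ⟨h4, h5⟩ | ⟨h4, h5, h6⟩
    · exact Or.inl ⟨h1, h5⟩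
    · exact absurd h2 h5
    · exact absurd h4 h3
    · exact Or.inr ⟨hB.trans h1 h4, h2, h6⟩
  · intro x y hxy a b hab
    by_cases h : G.mergeStep M e x a
    · exact Or.inl ⟨h, hM'.trans (hM'.symm hxy) h⟩
    · refine Or.inr ⟨?_, h, fun hy => h (hM'.trans hxy hy)⟩
      rcases G.mergeStep_char hM hab hxy with hxy' | ⟨hx, _⟩
      · exact hMB _ _ hxy'
      · exfalso
        rcases hx with hx | hx
        · exact h (G.mergeStep_le M e hx)
        · exact h (hM'.trans (G.mergeStep_le M e hx) (hM'.symm (G.mergeStep_gen M hab)))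

lemma good_foldl :
    ∀ (l : List E) (s : (V → V → Prop) × (V → V → Prop)),
      Equivalence s.1 → Equivalence s.2 → (∀ x y, s.1 x y → s.2 x y) →
      Equivalence (l.foldl G.stepPair s).1 ∧ Equivalence (l.foldl G.stepPair s).2 ∧
        (∀ x y, (l.foldl G.stepPair s).1 x y → (l.foldl G.stepPair s).2 x y) := by
  intro l
  induction l with
  | nil => exact fun s h1 h2 h3 => ⟨h1, h2, h3⟩
  | cons e l ih =>
    intro s h1 h2 h3
    obtain ⟨g1, g2, g3⟩ := G.good_step e h1 h2 h3
    exact ih _ g1 g2 g3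

variable (hB0 : Equivalence B0)
include hB0

lemma good (l : List E) :
    Equivalence (G.state B0 l).1 ∧ Equivalence (G.state B0 l).2 ∧
      (∀ x y, (G.state B0 l).1 x y → (G.state B0 l).2 x y) :=
  G.good_foldl l (Eq, B0) eq_equivalence hB0 (fun x y h => h ▸ hB0.refl x)

omit hB0

lemma foldl_fst_le :
    ∀ (l : List E) (s : (V → V → Prop) × (V → V → Prop)) (x y : V),
      s.1 x y → (l.foldl G.stepPair s).1 x y := by
  intro l
  induction l with
  | nil => exact fun s x y h => h
  | cons e l ih => exact fun s x y h => ih _ x y (G.mergeStep_le s.1 e h)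

lemma state_fst_mono {p q : ℕ} (hpq : p ≤ q) {x y : V}
    (h : (G.state B0 (L.take p)).1 x y) : (G.state B0 (L.take q)).1 x y := by
  have hq : L.take q = L.take p ++ (L.take q).drop p := by
    conv_lhs => rw [← List.take_append_drop p (L.take q)]
    rw [List.take_take, min_eq_left hpq]
  rw [state, hq, List.foldl_append]
  exact G.foldl_fst_le _ _ x y h

lemma state_take_succ {p : ℕ} (hp : p < L.length) :
    G.state B0 (L.take (p + 1)) = G.stepPair (G.state B0 (L.take p)) (L.get ⟨p, hp⟩) := by
  rw [state, state, List.take_succ, List.getElem?_eq_getElem hp, List.foldl_append]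
  rfl

lemma block_back (p : ℕ) (x y : V)
    (h : (G.state B0 (L.take (p + 1))).2 x y) :
    (G.state B0 (L.take p)).2 x y ∨ (G.state B0 (L.take (p + 1))).1 x y := by
  by_cases hp : p < L.length
  · rw [G.state_take_succ B0 L hp] at h ⊢
    set e := L.get ⟨p, hp⟩ with he
    obtain ⟨a, b, he'⟩ := G.ends_exists e
    rcases h a b he' with ⟨h1, h2⟩ | ⟨h1, _⟩
    · exact Or.inr ((G.mergeStep_equiv _ e).trans h1 ((G.mergeStep_equiv _ e).symm h2))
    · exact Or.inl h1
  · rw [List.take_of_length_le (Nat.le_of_not_lt hp),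
      List.take_of_length_le ((Nat.le_of_not_lt hp).trans (Nat.le_succ p))] at *
    exact Or.inl h

variable (hspan : ∀ v w : V, (G.state B0 L).1 v w)
include hspan

lemma length_mem_jset (a b : V) : (G.state B0 (L.take L.length)).1 a b := by
  rw [List.take_length]; exact hspan a b

lemma jIdx_mem (a b : V) : (G.state B0 (L.take (G.jIdx B0 L a b))).1 a b := by
  have h : sInf {p | (G.state B0 (L.take p)).1 a b} ∈ {p | (G.state B0 (L.take p)).1 a b} :=
    Nat.sInf_mem ⟨L.length, G.length_mem_jset B0 L hspan a b⟩
  exact h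

lemma jIdx_le_length (a b : V) : G.jIdx B0 L a b ≤ L.length :=
  Nat.sInf_le (G.length_mem_jset B0 L hspan a b)

lemma lt_jIdx_iff (a b : V) (p : ℕ) :
    p < G.jIdx B0 L a b ↔ ¬ (G.state B0 (L.take p)).1 a b := by
  constructor
  · exact fun h => Nat.notMem_of_lt_sInf h
  · intro h
    by_contra hc
    exact h (G.state_fst_mono B0 L (Nat.le_of_not_lt hc) (G.jIdx_mem B0 L hspan a b))

lemma jIdx_pos {a b : V} (hab : a ≠ b) : 0 < G.jIdx B0 L a b := by
  rw [G.lt_jIdx_iff B0 L hspan]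
  exact hab

variable (hTB : G.IsTransBlockSeq B0 L)
include hB0 hTB

lemma not_block_pred_jIdx {a b : V} (hab : a ≠ b) :
    ¬ (G.state B0 (L.take (G.jIdx B0 L a b - 1))).2 a b := by
  have hj1 : 1 ≤ G.jIdx B0 L a b := G.jIdx_pos B0 L hspan hab
  have hjle : G.jIdx B0 L a b ≤ L.length := G.jIdx_le_length B0 L hspan a b
  obtain ⟨q, hq1⟩ : ∃ q, G.jIdx B0 L a b = q + 1 := ⟨G.jIdx B0 L a b - 1, by omega⟩
  have hq : q < L.length := by omega
  have hMj : (G.state B0 (L.take (q + 1))).1 a b := hq1 ▸ G.jIdx_mem B0 L hspan a b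
  have hMq : ¬ (G.state B0 (L.take q)).1 a b :=
    (G.lt_jIdx_iff B0 L hspan a b q).1 (by omega)
  rw [hq1]
  have hq1' : q + 1 - 1 = q := by omega
  rw [hq1']
  rw [G.state_take_succ B0 L hq] at hMj
  obtain ⟨hMe, hBe, hMBe⟩ := G.good B0 hB0 (L.take q)
  obtain ⟨c, d, hcd⟩ := G.ends_exists (L.get ⟨q, hq⟩)
  have hchar := G.mergeStep_char hMe hcd hMj
  rcases hchar with h | ⟨ha, hb⟩
  · exact absurd h hMq
  have hTBq : ¬ (G.state B0 (L.take q)).2 c d := hTB q hq c d hcd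
  intro hBab
  rcases ha with ha | ha <;> rcases hb with hb | hb
  · exact hMq (hMe.trans ha (hMe.symm hb))
  · exact hTBq (hBe.trans (hBe.symm (hMBe _ _ ha)) (hBe.trans hBab (hMBe _ _ hb)))
  · exact hTBq (hBe.trans (hBe.symm (hMBe _ _ hb)) (hBe.trans (hBe.symm hBab) (hMBe _ _ ha)))
  · exact hMq (hMe.trans ha (hMe.symm hb))

lemma not_block_iff {a b : V} (hab : a ≠ b) (p : ℕ) :
    ¬ (G.state B0 (L.take p)).2 a b ↔
      G.iIdx B0 L a b ≤ p ∧ p < G.jIdx B0 L a b := by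
  have hne : {p | ¬ (G.state B0 (L.take p)).2 a b}.Nonempty :=
    ⟨G.jIdx B0 L a b - 1, G.not_block_pred_jIdx B0 L hB0 hspan hTB hab⟩
  rw [iIdx, if_neg hab]
  constructor
  · intro h
    refine ⟨Nat.sInf_le h, (G.lt_jIdx_iff B0 L hspan a b p).2 fun hM => h ?_⟩
    exact (G.good B0 hB0 (L.take p)).2.2 a b hM
  · rintro ⟨hi, hjp⟩
    have key : ∀ m, sInf {p | ¬ (G.state B0 (L.take p)).2 a b} ≤ m →
        m < G.jIdx B0 L a b → ¬ (G.state B0 (L.take m)).2 a b := by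
      intro m hm
      induction m, hm using Nat.le_induction with
      | base => exact fun _ => Nat.sInf_mem hne
      | succ m hm ih =>
        intro hmj
        have hBm := ih (lt_trans (Nat.lt_succ_self m) hmj)
        have hMm : ¬ (G.state B0 (L.take (m + 1))).1 a b :=
          (G.lt_jIdx_iff B0 L hspan a b (m + 1)).1 hmj
        intro hB
        rcases G.block_back B0 L m a b hB with h | h
        · exact hBm h
        · exact hMm h
    exact key p hi hjp

lemma tree_edge_idx {q : ℕ} (hq : q < L.length) {a b : V}
    (hcd : G.ends (L.get ⟨q, hq⟩) = s(a, b)) :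
    G.jIdx B0 L a b = q + 1 ∧ G.iIdx B0 L a b ≤ q ∧ a ≠ b := by
  have hBq : ¬ (G.state B0 (L.take q)).2 a b := hTB q hq a b hcd
  obtain ⟨hMe, hBe, hMBe⟩ := G.good B0 hB0 (L.take q)
  have hab : a ≠ b := fun h => hBq (h ▸ hBe.refl a)
  have hMq : ¬ (G.state B0 (L.take q)).1 a b := fun h => hBq (hMBe _ _ h)
  have hMq1 : (G.state B0 (L.take (q + 1))).1 a b := by
    rw [G.state_take_succ B0 L hq]
    exact G.mergeStep_gen _ hcd
  have hj : G.jIdx B0 L a b = q + 1 :=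
    le_antisymm (Nat.sInf_le hMq1)
      (Nat.succ_le_of_lt ((G.lt_jIdx_iff B0 L hspan a b q).2 hMq))
  refine ⟨hj, ?_, hab⟩
  rw [iIdx, if_neg hab]
  exact Nat.sInf_le hBq

lemma transBlock_iff (k : ℕ) (e : E) :
    G.TransBlock (G.state B0 (L.take k)).2 e ↔
      ∀ a b, G.ends e = s(a, b) →
        (G.iIdx B0 L a b ≤ k ∧ k < G.jIdx B0 L a b) := by
  constructor
  · intro h c d hcd
    have hBk := h c d hcd
    have hcd' : c ≠ d := fun h' => hBk (h' ▸ (G.good B0 hB0 (L.take k)).2.1.refl c)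
    exact (G.not_block_iff B0 L hB0 hspan hTB hcd' k).1 hBk
  · intro h c d hcd
    have hk := h c d hcd
    by_cases hcd' : c = d
    · exfalso
      subst hcd'
      have hj0 : G.jIdx B0 L c c ≤ 0 := Nat.sInf_le (show (G.state B0 (L.take 0)).1 c c from rfl)
      omega
    · exact (G.not_block_iff B0 L hB0 hspan hTB hcd' k).2 hk

lemma transBlock_get_iff (k : ℕ) {q : ℕ} (hq : q < L.length) :
    G.TransBlock (G.state B0 (L.take k)).2 (L.get ⟨q, hq⟩) ↔
      ((∀ a b, G.ends (L.get ⟨q, hq⟩) = s(a, b) →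
          (G.iIdx B0 L a b ≤ k ∧ k + 1 < G.jIdx B0 L a b)) ∨ k = q) := by
  rw [G.transBlock_iff B0 L hB0 hspan hTB]
  constructor
  · intro h
    by_cases hk : k = q
    · exact Or.inr hk
    · refine Or.inl fun a b hab => ?_
      obtain ⟨hj, hi, hne⟩ := G.tree_edge_idx B0 L hB0 hspan hTB hq hab
      have := h a b hab
      omega
  · rintro (h | rfl) a b hab
    · obtain ⟨hj, hi, hne⟩ := G.tree_edge_idx B0 L hB0 hspan hTB hq hab
      have := h a b hab
      omega
    · obtain ⟨hj, hi, hne⟩ := G.tree_edge_idx B0 L hB0 hspan hTB hq hab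
      omega

lemma kcount_eq [Fintype E] {k : ℕ} (hk : k < L.length) :
    G.kcount B0 L k =
      (L.toFinset.filter (fun e => ∀ a b, G.ends e = s(a, b) →
          (G.iIdx B0 L a b ≤ k ∧ k + 1 < G.jIdx B0 L a b))).card
      + ((Finset.univ \ L.toFinset).filter (fun e => ∀ a b, G.ends e = s(a, b) →
          (G.iIdx B0 L a b ≤ k ∧ k < G.jIdx B0 L a b))).card + 1 := by
  classical
  set g := L.get ⟨k, hk⟩ with hg
  have huniv : (Finset.univ : Finset E) = L.toFinset ∪ (Finset.univ \ L.toFinset) :=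
    (Finset.union_sdiff_of_subset (Finset.subset_univ _)).symm
  rw [kcount]
  conv_lhs => rw [huniv]
  rw [Finset.filter_union, Finset.card_union_of_disjoint
    (Finset.disjoint_filter_filter (Finset.disjoint_sdiff))]
  have h2 : ((Finset.univ \ L.toFinset).filter
        (fun e => G.TransBlock (G.state B0 (L.take k)).2 e)) =
      ((Finset.univ \ L.toFinset).filter (fun e => ∀ a b, G.ends e = s(a, b) →
          (G.iIdx B0 L a b ≤ k ∧ k < G.jIdx B0 L a b))) := by
    apply Finset.filter_congr
    intro e _
    simpa using G.transBlock_iff B0 L hB0 hspan hTB k e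
  have h1 : (L.toFinset.filter (fun e => G.TransBlock (G.state B0 (L.take k)).2 e)) =
      insert g (L.toFinset.filter (fun e => ∀ a b, G.ends e = s(a, b) →
          (G.iIdx B0 L a b ≤ k ∧ k + 1 < G.jIdx B0 L a b))) := by
    ext e
    simp only [Finset.mem_insert, Finset.mem_filter, List.mem_toFinset]
    constructor
    · rintro ⟨he, hTBe⟩
      obtain ⟨⟨q, hq⟩, rfl⟩ := List.mem_iff_get.1 he
      rcases (G.transBlock_get_iff B0 L hB0 hspan hTB k hq).1 hTBe with hY | rfl
      · exact Or.inr ⟨he, hY⟩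
      · exact Or.inl rfl
    · rintro (rfl | ⟨he, hY⟩)
      · refine ⟨List.get_mem L ⟨k, hk⟩, ?_⟩
        exact (G.transBlock_get_iff B0 L hB0 hspan hTB k hk).2 (Or.inr rfl)
      · obtain ⟨⟨q, hq⟩, rfl⟩ := List.mem_iff_get.1 he
        exact ⟨he, (G.transBlock_get_iff B0 L hB0 hspan hTB k hq).2 (Or.inl hY)⟩
    -- done
  rw [h1, h2, Finset.card_insert_of_notMem]
  · omega
  · simp only [Finset.mem_filter, not_and]
    intro _ hY
    obtain ⟨a, b, hcd⟩ := G.ends_exists g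
    obtain ⟨hj, hi, hne⟩ := G.tree_edge_idx B0 L hB0 hspan hTB hk hcd
    have := hY a b hcd
    omega

end Aux

end Multigraph

/-- for a trans-block ordered spanning tree `T_τ` (given as the
list `L`), the weight `w^Π(G, T_τ)`, given by the integral over
`[0,1]^{|V|-1}` of the product of the tree edge factors `Y_ℓ(u)` (over
`ℓ ∈ T`) and of the contact matrix entries `X_{v(ℓ),v'(ℓ)}(u)` (over
`ℓ ∉ T`), equals `∏_{p=0}^{|V|-2} 1/k_p`. -/

theorem integral_weight_eq_prod_inv_kcount
    {V E : Type} [Fintype V] [Fintype E] [Nonempty V]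
    (G : Multigraph V E) (hG : G.IsConnected)
    (B0 : V → V → Prop) (hB0 : Equivalence B0)
    (hnt : ∃ v w : V, ¬ B0 v w)
    (L : List E) (hlen : L.length = Fintype.card V - 1) (hnd : L.Nodup)
    (hTB : G.IsTransBlockSeq B0 L)
    (hspan : ∀ v w : V, (G.state B0 L).1 v w) :
    (∫ w in Set.univ.pi fun _ : Fin (Fintype.card V - 1) => Set.Icc (0 : ℝ) 1,
        (∏ e ∈ L.toFinset, G.Yent B0 L (Fintype.card V - 1) w e) *
          ∏ e ∈ Finset.univ \ L.toFinset, G.XentE B0 L (Fintype.card V - 1) w e) =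
      ∏ p ∈ Finset.range (Fintype.card V - 1), ((G.kcount B0 L p : ℝ))⁻¹ := by
  classical
  set n := Fintype.card V - 1 with hn
  have hlen' : L.length = n := hlen
  have hsplit : ∀ (s : Finset E) (q : E → Prop) (c : ℝ),
      (∏ e ∈ s, if q e then c else 1) = c ^ (s.filter q).card := by
    intro s q c
    rw [Finset.prod_ite, Finset.prod_const, Finset.prod_const_one, mul_one]
  have hfun : (fun w : Fin n → ℝ =>
      (∏ e ∈ L.toFinset, G.Yent B0 L n w e) *
        ∏ e ∈ Finset.univ \ L.toFinset, G.XentE B0 L n w e) =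
      fun w => ∏ k : Fin n, (w k) ^ (G.kcount B0 L (k : ℕ) - 1) := by
    funext w
    simp only [Multigraph.Yent, Multigraph.XentE]
    rw [Finset.prod_comm, Finset.prod_comm (s := Finset.univ \ L.toFinset),
      ← Finset.prod_mul_distrib]
    refine Finset.prod_congr rfl fun k _ => ?_
    refine (congrArg₂ (· * ·) (hsplit L.toFinset _ (w k))
      (hsplit (Finset.univ \ L.toFinset) _ (w k))).trans ?_
    rw [← pow_add]
    congr 1
    have hkL : (k : ℕ) < L.length := lt_of_lt_of_eq k.isLt hlen'.symm
    have hkc := G.kcount_eq B0 L hB0 hspan hTB hkL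
    omega
  rw [hfun, ← MeasureTheory.integral_indicator
    (MeasurableSet.univ_pi fun _ => measurableSet_Icc)]
  have hind : (Set.univ.pi fun _ : Fin n => Set.Icc (0 : ℝ) 1).indicator
      (fun w => ∏ k : Fin n, (w k) ^ (G.kcount B0 L (k : ℕ) - 1)) =
      fun w => ∏ k : Fin n,
        (Set.Icc (0 : ℝ) 1).indicator (fun x => x ^ (G.kcount B0 L (k : ℕ) - 1)) (w k) := by
    funext w
    by_cases hw : w ∈ Set.univ.pi fun _ : Fin n => Set.Icc (0 : ℝ) 1
    · rw [Set.indicator_of_mem hw]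
      exact Finset.prod_congr rfl fun k _ =>
        (Set.indicator_of_mem (hw k (Set.mem_univ k)) _).symm
    · rw [Set.indicator_of_notMem hw]
      obtain ⟨k, hk⟩ : ∃ k, w k ∉ Set.Icc (0 : ℝ) 1 := by
        by_contra hc
        push_neg at hc
        exact hw fun i _ => hc i
      exact (Finset.prod_eq_zero (Finset.mem_univ k)
        (by rw [Set.indicator_of_notMem hk])).symm
  rw [hind]
  beta_reduce
  rw [MeasureTheory.integral_fintype_prod_volume_eq_prod (ι := Fin n)
    (fun (k : Fin n) (x : ℝ) =>
      (Set.Icc (0 : ℝ) 1).indicator (fun x => x ^ (G.kcount B0 L (k : ℕ) - 1)) x)]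
  have hint : ∀ m : ℕ,
      (∫ x : ℝ, (Set.Icc (0 : ℝ) 1).indicator (fun x => x ^ m) x) = ((m : ℝ) + 1)⁻¹ := by
    intro m
    rw [MeasureTheory.integral_indicator measurableSet_Icc,
      MeasureTheory.integral_Icc_eq_integral_Ioc,
      ← intervalIntegral.integral_of_le (zero_le_one (α := ℝ)), integral_pow]
    rw [one_pow, zero_pow (Nat.succ_ne_zero m), sub_zero, one_div]
  simp only [hint]
  rw [Fin.prod_univ_eq_prod_range (fun m => (((G.kcount B0 L m - 1 : ℕ) : ℝ) + 1)⁻¹) n]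
  refine Finset.prod_congr rfl fun p hp => ?_
  have hp' : p < L.length := by rw [hlen']; exact Finset.mem_range.1 hp
  have h1 : 1 ≤ G.kcount B0 L p := by
    rw [G.kcount_eq B0 L hB0 hspan hTB hp']
    omega
  rw [Nat.cast_sub h1]
  congr 1
  push_cast
  ring
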